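/- Theorem 1: For an extended cyclic code C with exponent set S_C, the cyclic derivative descendants D(C, β) in all directions β ∈ F^* are the same code, denoted D(C), namely the extended cyclic code whose exponent set is ∪_{s∈cr(S_C)} cc(P(s)). -/

import Mathlib

/-- Hamming weight of the `m`-bit binary expansion of `s`. -/
def wtm (m s : ℕ) : ℕ := ((Finset.range m).filter fun j => s.testBit j).card

/-- `Pset s`: the set of nonnegative integers whose binary expansion is
properly covered by that of `s`. -/
def Pset (s : ℕ) : Finset ℕ :=
  (Finset.range (s + 1)).filter fun k => k ||| s = s ∧ k ≠ s

/-- The cyclotomic coset `C_s` modulo `n = 2^m - 1`. -/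
def cycCoset (n m s : ℕ) : Finset ℕ := (Finset.range m).image fun j => 2 ^ j * s % n

/-- `cc S`: union of all cyclotomic cosets meeting `S`. -/
def ccSet (n m : ℕ) (S : Finset ℕ) : Finset ℕ := S.biUnion (cycCoset n m)

/-- `cr S`: the set of coset representatives (minimal elements of the cosets) of `S`. -/
def crSet (n m : ℕ) (S : Finset ℕ) : Finset ℕ :=
  (ccSet n m S).filter fun s => ∀ t ∈ cycCoset n m s, s ≤ t

/-- `S` is an exponent set: a set of residues mod `n` closed under doubling mod `n`. -/
def IsExpSet (n : ℕ) (S : Finset ℕ) : Prop :=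
  (∀ j ∈ S, j < n) ∧ ∀ j ∈ S, 2 * j % n ∈ S

/-- The extended cyclic code of length `2^m` with exponent set `S`. -/
def extCyclicCode {F : Type*} [Field F] (n : ℕ) (S : Finset ℕ) : Set (F → F) :=
  { c | ∃ A : ℕ → F, (∀ j ∈ S, A (2 * j % n) = A j ^ 2) ∧
      ∀ x : F, c x = ∑ j ∈ S, A j * x ^ j }

/-- The set of derivatives of the codewords of `C` in direction `β`. -/
def derivSet {F : Type*} [Field F] (β : F) (C : Set (F → F)) : Set (F → F) :=
  { d | ∃ c ∈ C, d = fun x => c (x + β) - c x }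

/-- Minimum Hamming distance (= minimum weight) of a code. -/
noncomputable def minDist {F : Type*} [Field F] [Fintype F] [DecidableEq F]
    (C : Set (F → F)) : ℕ :=
  sInf { w | ∃ c ∈ C, c ≠ (0 : F → F) ∧ hammingNorm c = w }


/-- bit-domination: every binary digit of `k` is ≤ the corresponding digit of `t`. -/
def BSub (k t : ℕ) : Prop := ∀ i, k.testBit i = true → t.testBit i = true

lemma or_eq_iff_bsub {k t : ℕ} : k ||| t = t ↔ BSub k t := by
  constructor
  · intro h i hk
    have h2 := congrArg (fun x => Nat.testBit x i) h
    simpa [Nat.testBit_or, hk] using h2.symm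
  · intro h
    apply Nat.eq_of_testBit_eq
    intro i
    rcases Bool.eq_false_or_eq_true (k.testBit i) with h1 | h1
    · simp [Nat.testBit_or, h1, h i h1]
    · simp [Nat.testBit_or, h1]

lemma bsub_le {k t : ℕ} (h : BSub k t) : k ≤ t := Nat.le_of_testBit h

lemma bsub_zero_iff {k : ℕ} : BSub k 0 ↔ k = 0 := by
  constructor
  · intro h
    apply Nat.eq_of_testBit_eq
    intro i
    rcases Bool.eq_false_or_eq_true (k.testBit i) with h1 | h1
    · have := h i h1; simp at this
    · simp [h1]
  · rintro rfl i h; simpa using h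

lemma bsub_iff_bits {k t : ℕ} :
    BSub k t ↔ ((k % 2 = 1 → t % 2 = 1) ∧ BSub (k / 2) (t / 2)) := by
  constructor
  · intro h
    refine ⟨fun hk => ?_, fun i hi => ?_⟩
    · have := h 0 (by simpa [Nat.testBit_zero] using hk)
      simpa [Nat.testBit_zero] using this
    · have := h (i + 1) (by simpa [Nat.testBit_add_one] using hi)
      simpa [Nat.testBit_add_one] using this
  · rintro ⟨h0, h1⟩ i hi
    cases i with
    | zero =>
      simp only [Nat.testBit_zero, decide_eq_true_eq] at hi ⊢
      exact h0 hi
    | succ i =>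
      simp only [Nat.testBit_add_one] at hi ⊢
      exact h1 i hi

lemma choose_mod_two : ∀ t k : ℕ, Nat.choose t k % 2 = 1 ↔ BSub k t := by
  intro t
  induction t using Nat.strong_induction_on with
  | _ t IH =>
    intro k
    rcases Nat.eq_zero_or_pos t with rfl | ht
    · rcases Nat.eq_zero_or_pos k with rfl | hk
      · simp [bsub_zero_iff]
      · rw [bsub_zero_iff]
        rcases k with _ | k
        · omega
        · rw [Nat.choose_zero_succ]; simp
    · haveI : Fact (Nat.Prime 2) := ⟨Nat.prime_two⟩
      have hrec := @Choose.choose_modEq_choose_mod_mul_choose_div_nat t k 2 _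
      have hdiv : t / 2 < t := Nat.div_lt_self ht (by norm_num)
      have IH' := IH (t / 2) hdiv (k / 2)
      rw [Nat.ModEq] at hrec
      rw [hrec, bsub_iff_bits, Nat.mul_mod]
      have h1 : Nat.choose (t % 2) (k % 2) % 2 = if (k % 2 = 1 → t % 2 = 1) then 1 else 0 := by
        have hk2 := Nat.mod_two_eq_zero_or_one k
        have ht2 := Nat.mod_two_eq_zero_or_one t
        rcases hk2 with hk2 | hk2 <;> rcases ht2 with ht2 | ht2 <;>
          rw [hk2, ht2] <;> norm_num
      rw [h1]
      by_cases hc : k % 2 = 1 → t % 2 = 1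
      · rw [if_pos hc, one_mul, Nat.mod_mod_of_dvd _ (dvd_refl 2)]
        exact ⟨fun h => ⟨hc, IH'.mp h⟩, fun h => IH'.mpr h.2⟩
      · rw [if_neg hc, zero_mul]
        simp only [Nat.zero_mod]
        exact ⟨fun h => by omega, fun h => absurd h.1 hc⟩

lemma cast_choose_char_two {R : Type*} [CommRing R] [CharP R 2] (t k : ℕ) :
    (Nat.choose t k : R) = if k ||| t = t then 1 else 0 := by
  have h := Nat.div_add_mod (Nat.choose t k) 2
  have h0 : (Nat.choose t k : R) = ((Nat.choose t k % 2 : ℕ) : R) := by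
    conv_lhs => rw [← h]
    push_cast
    rw [show (2:R) = 0 by exact_mod_cast CharP.cast_eq_zero R 2]
    ring
  rw [h0]
  by_cases hb : BSub k t
  · rw [if_pos (or_eq_iff_bsub.mpr hb), (choose_mod_two t k).mpr hb]; norm_num
  · rw [if_neg (fun hh => hb (or_eq_iff_bsub.mp hh))]
    have h2 : ¬ (Nat.choose t k % 2 = 1) := fun hh => hb ((choose_mod_two t k).mp hh)
    have h3 : Nat.choose t k % 2 = 0 := by omega
    rw [h3]; norm_num

lemma char_two_add_pow {R : Type*} [CommRing R] [CharP R 2] (x b : R) (t : ℕ) :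
    (x + b) ^ t = ∑ k ∈ (Finset.range (t+1)).filter (fun k => k ||| t = t),
      b ^ (t - k) * x ^ k := by
  rw [add_pow, Finset.sum_filter]
  apply Finset.sum_congr rfl
  intro k hk
  rw [cast_choose_char_two]
  by_cases hc : k ||| t = t
  · rw [if_pos hc, if_pos hc, mul_one]; ring
  · rw [if_neg hc, if_neg hc, mul_zero]



section Rot

variable {m n : ℕ}

lemma n_pos (hm : 0 < m) (hn : n = 2^m - 1) : 0 < n := by
  have h1 : 2 ≤ 2^m := by
    calc 2 = 2^1 := (pow_one 2).symm
    _ ≤ 2^m := Nat.pow_le_pow_right (by norm_num) hm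
  omega

lemma n_succ (hm : 0 < m) (hn : n = 2^m - 1) : n + 1 = 2^m := by
  have h1 : 1 ≤ 2^m := Nat.one_le_two_pow
  omega

lemma two_pow_m_mul_mod (hm : 0 < m) (hn : n = 2^m - 1) (a : ℕ) :
    2^m * a % n = a % n := by
  rw [← n_succ hm hn, add_mul, one_mul, add_comm, Nat.add_mul_mod_self_left]

lemma two_pow_m_pow_mul_mod (hm : 0 < m) (hn : n = 2^m - 1) :
    ∀ q a : ℕ, (2^m)^q * a % n = a % n := by
  intro q
  induction q with
  | zero => intro a; simp
  | succ q IH =>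
    intro a
    have : (2^m)^(q+1) * a = (2^m)^q * (2^m * a) := by ring
    rw [this, IH, two_pow_m_mul_mod hm hn]

lemma pow_mod_exp (hm : 0 < m) (hn : n = 2^m - 1) (i a : ℕ) :
    2^(i % m) * a % n = 2^i * a % n := by
  conv_rhs => rw [show i = m * (i / m) + i % m from (Nat.div_add_mod i m).symm]
  rw [pow_add, pow_mul, mul_assoc, two_pow_m_pow_mul_mod hm hn]

lemma pow_mul_mod_succ (hm : 0 < m) (hn : n = 2^m - 1) (i a : ℕ) :
    2^(i+1) * a % n = 2 * (2^i * a % n) % n := by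
  have h1 : 2 * (2^i * a % n) % n = 2 * (2^i * a) % n := by
    conv_rhs => rw [Nat.mul_mod]
    conv_lhs => rw [Nat.mul_mod]
    rw [Nat.mod_mod_of_dvd _ (dvd_refl n)]
  rw [h1]
  ring_nf

lemma rot_lt (hm : 0 < m) (hn : n = 2^m - 1) {a : ℕ} (_ : a < n) : 2*a % n < n :=
  Nat.mod_lt _ (n_pos hm hn)

lemma rot_val (hm : 0 < m) (hn : n = 2^m - 1) {a : ℕ} (ha : a < n) :
    2*a % n = 2*(a % 2^(m-1)) + a / 2^(m-1) := by
  have hp : 2 * 2^(m-1) = 2^m := by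
    rw [← pow_succ']
    congr 1
    omega
  have hn1 : n + 1 = 2^m := n_succ hm hn
  have hp0 : 0 < 2^(m-1) := Nat.pow_pos (by norm_num)
  have hdm := Nat.div_add_mod a (2^(m-1))
  have hr : a % 2^(m-1) < 2^(m-1) := Nat.mod_lt _ hp0
  have hb : a / 2^(m-1) ≤ 1 := by
    have h3 : a / 2^(m-1) < 2 := (Nat.div_lt_iff_lt_mul hp0).mpr (by omega)
    omega
  rcases Nat.le_one_iff_eq_zero_or_eq_one.mp hb with hb0 | hb1
  · rw [hb0] at hdm ⊢
    have ha' : a = a % 2^(m-1) := by omega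
    rw [Nat.mod_eq_of_lt (by omega)]
    omega
  · rw [hb1] at hdm ⊢
    have ha' : a = 2^(m-1) + a % 2^(m-1) := by omega
    have h2 : 2 * a = n + (2 * (a % 2^(m-1)) + 1) := by omega
    rw [h2, Nat.add_mod_left, Nat.mod_eq_of_lt (by omega)]

lemma rot_testBit (hm : 0 < m) (hn : n = 2^m - 1) {a : ℕ} (ha : a < n) (i : ℕ) :
    (2*a % n).testBit i = (decide (i < m) && a.testBit ((i + (m-1)) % m)) := by
  rw [rot_val hm hn ha]
  have hp0 : 0 < 2^(m-1) := Nat.pow_pos (by norm_num)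
  have hb : a / 2^(m-1) ≤ 1 := by
    have hn1 : n + 1 = 2^m := n_succ hm hn
    have hp : 2 * 2^(m-1) = 2^m := by
      rw [← pow_succ']; congr 1; omega
    have h3 : a / 2^(m-1) < 2 := (Nat.div_lt_iff_lt_mul hp0).mpr (by omega)
    omega
  cases i with
  | zero =>
    have h0 : (0 + (m-1)) % m = m - 1 := by
      rw [Nat.zero_add, Nat.mod_eq_of_lt (by omega)]
    rw [h0]
    have hmod : (2*(a % 2^(m-1)) + a / 2^(m-1)) % 2 = (a / 2^(m-1)) % 2 := by
      omega
    have htb : a.testBit (m-1) = decide (a / 2^(m-1) % 2 = 1) := Nat.testBit_eq_decide_div_mod_eq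
    rw [Nat.testBit_zero, hmod, htb]
    simp [hm]
  | succ i =>
    rw [Nat.testBit_add_one]
    have hdiv : (2*(a % 2^(m-1)) + a / 2^(m-1)) / 2 = a % 2^(m-1) := by
      rcases Nat.le_one_iff_eq_zero_or_eq_one.mp hb with h0 | h0 <;> rw [h0] <;> omega
    rw [hdiv]
    by_cases him : i + 1 < m
    · have h1 : (i + 1 + (m-1)) % m = i := by
        have : i + 1 + (m - 1) = i + m := by omega
        rw [this, Nat.add_mod_right, Nat.mod_eq_of_lt (by omega)]
      rw [h1]
      have h2 := Nat.testBit_mod_two_pow a (m-1) i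
      rw [h2]
      have h3 : i < m - 1 := by omega
      simp [him, h3]
    · have h2 : (a % 2^(m-1)) < 2^i := by
        have : 2^(m-1) ≤ 2^i := Nat.pow_le_pow_right (by norm_num) (by omega)
        have := Nat.mod_lt a hp0
        omega
      rw [Nat.testBit_lt_two_pow h2]
      simp [him]

lemma rot_or (hm : 0 < m) (hn : n = 2^m - 1) {a b : ℕ} (ha : a < n) (hb : b < n)
    (hab : a ||| b = b) : (2*a%n) ||| (2*b%n) = 2*b%n := by
  apply Nat.eq_of_testBit_eq
  intro i
  rw [Nat.testBit_or, rot_testBit hm hn ha, rot_testBit hm hn hb]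
  have h := or_eq_iff_bsub.mp hab ((i+(m-1))%m)
  cases hA : a.testBit ((i+(m-1))%m)
  · simp
  · rw [h hA]
    simp

lemma rot_inv (hm : 0 < m) (hn : n = 2^m - 1) {a : ℕ} (ha : a < n) :
    2^(m-1) * (2*a % n) % n = a := by
  have h1 : 2^(m-1) * (2*a % n) % n = 2^(m-1) * (2*a) % n := by
    conv_rhs => rw [Nat.mul_mod]
    conv_lhs => rw [Nat.mul_mod]
    rw [Nat.mod_mod_of_dvd _ (dvd_refl n)]
  rw [h1]
  have h2 : 2^(m-1) * (2*a) = 2^m * a := by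
    rw [show (2:ℕ)^m = 2^(m-1) * 2 by rw [← pow_succ]; congr 1; omega]
    ring
  rw [h2, two_pow_m_mul_mod hm hn, Nat.mod_eq_of_lt ha]

lemma rot_inj (hm : 0 < m) (hn : n = 2^m - 1) {a b : ℕ} (ha : a < n) (hb : b < n)
    (h : 2*a%n = 2*b%n) : a = b := by
  rw [← rot_inv hm hn ha, h, rot_inv hm hn hb]

lemma pow_rot_or (hm : 0 < m) (hn : n = 2^m - 1) :
    ∀ i : ℕ, ∀ {a b : ℕ}, a < n → b < n → a ||| b = b →
      (2^i*a%n) ||| (2^i*b%n) = 2^i*b%n := by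
  intro i
  induction i with
  | zero =>
    intro a b ha hb hab
    simpa [Nat.mod_eq_of_lt ha, Nat.mod_eq_of_lt hb] using hab
  | succ i IH =>
    intro a b ha hb hab
    rw [pow_mul_mod_succ hm hn, pow_mul_mod_succ hm hn]
    exact rot_or hm hn (Nat.mod_lt _ (n_pos hm hn)) (Nat.mod_lt _ (n_pos hm hn)) (IH ha hb hab)

lemma pow_rot_inj (hm : 0 < m) (hn : n = 2^m - 1) :
    ∀ i : ℕ, ∀ {a b : ℕ}, a < n → b < n → 2^i*a%n = 2^i*b%n → a = b := by
  intro i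
  induction i with
  | zero =>
    intro a b ha hb h
    simpa [Nat.mod_eq_of_lt ha, Nat.mod_eq_of_lt hb] using h
  | succ i IH =>
    intro a b ha hb h
    rw [pow_mul_mod_succ hm hn, pow_mul_mod_succ hm hn] at h
    exact IH ha hb (rot_inj hm hn (Nat.mod_lt _ (n_pos hm hn)) (Nat.mod_lt _ (n_pos hm hn)) h)

lemma pow_m_mul_mod_self (hm : 0 < m) (hn : n = 2^m - 1) {a : ℕ} (ha : a < n) :
    2^m * a % n = a := by
  rw [two_pow_m_mul_mod hm hn, Nat.mod_eq_of_lt ha]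

lemma rot_or_iff (hm : 0 < m) (hn : n = 2^m - 1) {a b : ℕ} (ha : a < n) (hb : b < n) :
    ((2*a%n) ||| (2*b%n) = 2*b%n ∧ 2*a%n ≠ 2*b%n) ↔ (a ||| b = b ∧ a ≠ b) := by
  constructor
  · rintro ⟨h1, h2⟩
    have h3 := pow_rot_or hm hn (m-1) (rot_lt hm hn ha) (rot_lt hm hn hb) h1
    rw [rot_inv hm hn ha, rot_inv hm hn hb] at h3
    exact ⟨h3, fun he => h2 (by rw [he])⟩
  · rintro ⟨h1, h2⟩
    exact ⟨rot_or hm hn ha hb h1, fun he => h2 (rot_inj hm hn ha hb he)⟩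

end Rot

section Cosets

variable {m n : ℕ}

lemma mul_mod_mod (x y N : ℕ) : x * (y % N) % N = x * y % N := by
  conv_rhs => rw [Nat.mul_mod]
  conv_lhs => rw [Nat.mul_mod]
  rw [Nat.mod_mod_of_dvd _ (dvd_refl N)]

lemma mem_cycCoset_iff {s t : ℕ} : t ∈ cycCoset n m s ↔ ∃ i, i < m ∧ 2^i * s % n = t := by
  simp [cycCoset, Finset.mem_image, Finset.mem_range]

lemma cycCoset_lt (hm : 0 < m) (hn : n = 2^m - 1) {s t : ℕ} (ht : t ∈ cycCoset n m s) :
    t < n := by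
  obtain ⟨i, _, hit⟩ := mem_cycCoset_iff.mp ht
  rw [← hit]
  exact Nat.mod_lt _ (n_pos hm hn)

lemma self_mem_cycCoset (hm : 0 < m) {s : ℕ} (hs : s < n) : s ∈ cycCoset n m s :=
  mem_cycCoset_iff.mpr ⟨0, hm, by simpa using Nat.mod_eq_of_lt hs⟩

lemma cycCoset_subset_of_mem (hm : 0 < m) (hn : n = 2^m - 1) {s a : ℕ} (hs : s < n)
    (ha : a ∈ cycCoset n m s) : cycCoset n m a ⊆ cycCoset n m s := by
  obtain ⟨i, him, hia⟩ := mem_cycCoset_iff.mp ha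
  intro t ht
  obtain ⟨j, hjm, hjt⟩ := mem_cycCoset_iff.mp ht
  refine mem_cycCoset_iff.mpr ⟨(j+i) % m, Nat.mod_lt _ hm, ?_⟩
  rw [pow_mod_exp hm hn, ← hjt, ← hia, mul_mod_mod, ← mul_assoc, ← pow_add]

lemma mem_cycCoset_symm (hm : 0 < m) (hn : n = 2^m - 1) {s a : ℕ} (hs : s < n)
    (ha : a ∈ cycCoset n m s) : s ∈ cycCoset n m a := by
  obtain ⟨i, him, hia⟩ := mem_cycCoset_iff.mp ha
  refine mem_cycCoset_iff.mpr ⟨(m - i) % m, Nat.mod_lt _ hm, ?_⟩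
  rw [pow_mod_exp hm hn, ← hia, mul_mod_mod, ← mul_assoc, ← pow_add,
    show m - i + i = m by omega, pow_m_mul_mod_self hm hn hs]

lemma cycCoset_eq_of_mem (hm : 0 < m) (hn : n = 2^m - 1) {s a : ℕ} (hs : s < n)
    (ha : a ∈ cycCoset n m s) : cycCoset n m a = cycCoset n m s := by
  apply Finset.Subset.antisymm (cycCoset_subset_of_mem hm hn hs ha)
  exact cycCoset_subset_of_mem hm hn (cycCoset_lt hm hn ha) (mem_cycCoset_symm hm hn hs ha)

lemma expSet_closure_pow (hm : 0 < m) (hn : n = 2^m - 1) {S : Finset ℕ}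
    (hS : IsExpSet n S) {j : ℕ} (hj : j ∈ S) : ∀ i, 2^i * j % n ∈ S := by
  intro i
  induction i with
  | zero => simpa [Nat.mod_eq_of_lt (hS.1 j hj)] using hj
  | succ i IH =>
    rw [pow_mul_mod_succ hm hn]
    exact hS.2 _ IH

lemma ccSet_subset (hm : 0 < m) (hn : n = 2^m - 1) {S : Finset ℕ} (hS : IsExpSet n S) :
    ccSet n m S ⊆ S := by
  intro t ht
  obtain ⟨j, hj, hjt⟩ := Finset.mem_biUnion.mp ht
  obtain ⟨i, _, hit⟩ := mem_cycCoset_iff.mp hjt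
  rw [← hit]
  exact expSet_closure_pow hm hn hS hj i

lemma crSet_mem (hm : 0 < m) (hn : n = 2^m - 1) {S : Finset ℕ} (hS : IsExpSet n S)
    {s : ℕ} (hs : s ∈ crSet n m S) : s ∈ S ∧ s < n := by
  have h1 := (Finset.mem_filter.mp hs).1
  exact ⟨ccSet_subset hm hn hS h1, hS.1 _ (ccSet_subset hm hn hS h1)⟩

lemma exists_rep (hm : 0 < m) (hn : n = 2^m - 1) {S : Finset ℕ} (hS : IsExpSet n S)
    {j : ℕ} (hj : j ∈ S) : ∃ s ∈ crSet n m S, j ∈ cycCoset n m s := by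
  have hjn : j < n := hS.1 j hj
  have hne : (cycCoset n m j).Nonempty := ⟨j, self_mem_cycCoset hm hjn⟩
  set s := (cycCoset n m j).min' hne with hsdef
  have hsmem : s ∈ cycCoset n m j := (cycCoset n m j).min'_mem hne
  have heq : cycCoset n m s = cycCoset n m j := cycCoset_eq_of_mem hm hn hjn hsmem
  refine ⟨s, Finset.mem_filter.mpr ⟨Finset.mem_biUnion.mpr ⟨j, hj, hsmem⟩, ?_⟩,
    mem_cycCoset_symm hm hn hjn hsmem⟩
  intro t ht
  rw [heq] at ht
  exact (cycCoset n m j).min'_le t ht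

lemma mem_Pset_iff {k s : ℕ} : k ∈ Pset s ↔ (k ||| s = s ∧ k ≠ s) := by
  rw [Pset, Finset.mem_filter, Finset.mem_range]
  constructor
  · tauto
  · intro h
    exact ⟨by
      have : k ≤ s := bsub_le (or_eq_iff_bsub.mp h.1)
      omega, h⟩

lemma Pset_le {k s : ℕ} (hk : k ∈ Pset s) : k ≤ s :=
  bsub_le (or_eq_iff_bsub.mp (mem_Pset_iff.mp hk).1)

lemma Pset_to_rep (hm : 0 < m) (hn : n = 2^m - 1) {s j k : ℕ} (hs : s < n)
    (hj : j ∈ cycCoset n m s) (hk : k ∈ Pset j) :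
    ∃ k' ∈ Pset s, k ∈ cycCoset n m k' := by
  obtain ⟨i, him, hij⟩ := mem_cycCoset_iff.mp hj
  have hjn : j < n := cycCoset_lt hm hn hj
  obtain ⟨hor, hne⟩ := mem_Pset_iff.mp hk
  have hkn : k < n := lt_of_le_of_lt (Pset_le hk) hjn
  have hjs : 2^(m-i) * j % n = s := by
    rw [← hij, mul_mod_mod, ← mul_assoc, ← pow_add, show m - i + i = m by omega,
      pow_m_mul_mod_self hm hn hs]
  refine ⟨2^(m-i) * k % n, mem_Pset_iff.mpr ⟨?_, ?_⟩, ?_⟩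
  · have := pow_rot_or hm hn (m-i) hkn hjn hor
    rwa [hjs] at this
  · intro he
    rw [← hjs] at he
    exact hne (pow_rot_inj hm hn (m-i) hkn hjn he)
  · refine mem_cycCoset_iff.mpr ⟨i, him, ?_⟩
    rw [mul_mod_mod, ← mul_assoc, ← pow_add, show i + (m - i) = m by omega,
      pow_m_mul_mod_self hm hn hkn]

lemma expSet_pre (hm : 0 < m) (hn : n = 2^m - 1) {S : Finset ℕ} (hS : IsExpSet n S)
    {j : ℕ} (hj : j < n) (h : 2*j % n ∈ S) : j ∈ S := by
  have h2 := expSet_closure_pow hm hn hS h (m-1)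
  rwa [rot_inv hm hn hj] at h2

end Cosets

section FieldLemmas

open Polynomial

variable {F : Type*} [Field F] [Fintype F] {m n : ℕ}

lemma char_two_of_card (hm : 0 < m) (hF : Fintype.card F = 2^m) : CharP F 2 := by
  have h0 : ((Fintype.card F : ℕ) : F) = 0 := FiniteField.cast_card_eq_zero F
  rw [hF] at h0
  have h1 : ((2:ℕ) : F)^m = 0 := by push_cast at h0 ⊢; exact h0
  have h2 : ((2:ℕ) : F) = 0 := pow_eq_zero_iff (by omega : m ≠ 0) |>.mp h1
  have h3 : ringChar F ∣ 2 := ringChar.dvd h2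
  have h4 : ringChar F ≠ 1 := by
    intro h
    have := ringChar.charP F
    rw [h] at this
    have hc := CharP.cast_eq_zero F 1
    rw [Nat.cast_one] at hc
    exact one_ne_zero hc
  have h5 : ringChar F = 2 := ((Nat.prime_two).eq_one_or_self_of_dvd _ h3).resolve_left h4
  rw [← h5]
  exact ringChar.charP F

lemma pow_card_F (hF : Fintype.card F = 2^m) (a : F) : a^(2^m) = a := by
  rw [← hF]; exact FiniteField.pow_card a

lemma pow_n_eq_one (hn : n = 2^m - 1) (hF : Fintype.card F = 2^m) {β : F} (hβ : β ≠ 0) :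
    β^n = 1 := by
  rw [hn, ← hF]; exact FiniteField.pow_card_sub_one_eq_one β hβ

lemma pow_mod_n (hn : n = 2^m - 1) (hF : Fintype.card F = 2^m) {β : F} (hβ : β ≠ 0)
    (a : ℕ) : β^a = β^(a % n) := by
  conv_lhs => rw [show a = n*(a/n) + a%n from by
    rw [Nat.div_add_mod]]
  rw [pow_add, pow_mul, pow_n_eq_one hn hF hβ, one_pow, one_mul]

lemma pow_sub_congr {β : F} (hβ : β ≠ 0) {u v a b : ℕ} (huv : v ≤ u) (hab : b ≤ a)
    (hu : β^u = β^a) (hv : β^v = β^b) : β^(u-v) = β^(a-b) := by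
  have h1 : β^(u-v) * β^v = β^(a-b) * β^v := by
    rw [← pow_add, Nat.sub_add_cancel huv, hu, hv, ← pow_add, Nat.sub_add_cancel hab]
  exact mul_right_cancel₀ (pow_ne_zero _ hβ) h1

lemma poly_coeff_sum (K : Finset ℕ) (c : ℕ → F) (u : ℕ) :
    (∑ k ∈ K, Polynomial.C (c k) * Polynomial.X ^ k).coeff u = if u ∈ K then c u else 0 := by
  rw [Polynomial.finset_sum_coeff]
  have h1 : ∀ k ∈ K, (Polynomial.C (c k) * Polynomial.X ^ k).coeff u
      = if k = u then c k else 0 := by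
    intro k _
    rw [Polynomial.coeff_C_mul, Polynomial.coeff_X_pow]
    by_cases h : u = k
    · simp [h]
    · rw [if_neg h, if_neg (fun hh : k = u => h hh.symm), mul_zero]
  rw [Finset.sum_congr rfl h1, Finset.sum_ite_eq' K u c]

lemma poly_natDegree_sum_le (K : Finset ℕ) (c : ℕ → F) (d : ℕ) (hK : ∀ k ∈ K, k ≤ d) :
    (∑ k ∈ K, Polynomial.C (c k) * Polynomial.X ^ k).natDegree ≤ d := by
  apply Polynomial.natDegree_sum_le_of_forall_le
  intro k hk
  calc (Polynomial.C (c k) * Polynomial.X ^ k).natDegree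
      ≤ (Polynomial.X ^ k : Polynomial F).natDegree := Polynomial.natDegree_C_mul_le _ _
    _ = k := Polynomial.natDegree_X_pow k
    _ ≤ d := hK k hk

lemma poly_eq_of_eval_eq (p q : Polynomial F) (hp : p.natDegree < Fintype.card F)
    (hq : q.natDegree < Fintype.card F) (h : ∀ x : F, p.eval x = q.eval x) : p = q := by
  have h1 : p - q = 0 := by
    apply Polynomial.eq_zero_of_natDegree_lt_card_of_eval_eq_zero (p - q)
      (Function.injective_id)
    · intro x
      simp [h x]
    · calc (p - q).natDegree ≤ max p.natDegree q.natDegree := Polynomial.natDegree_sub_le p q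
        _ < Fintype.card F := max_lt hp hq
  have := sub_eq_zero.mp h1
  exact this

lemma poly_exists_eval_ne (p : Polynomial F) (hp : p ≠ 0)
    (hd : p.natDegree < Fintype.card F) : ∃ a : F, p.eval a ≠ 0 := by
  by_contra hall
  push_neg at hall
  exact hp (Polynomial.eq_zero_of_natDegree_lt_card_of_eval_eq_zero p
    (Function.injective_id) (fun x => hall x) hd)

lemma filter_or_eq_insert (j : ℕ) :
    (Finset.range (j+1)).filter (fun k => k ||| j = j) = insert j (Pset j) := by
  ext k
  constructor
  · intro h
    have h1 := Finset.mem_filter.mp h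
    by_cases hk : k = j
    · exact Finset.mem_insert.mpr (Or.inl hk)
    · exact Finset.mem_insert.mpr (Or.inr (mem_Pset_iff.mpr ⟨h1.2, hk⟩))
  · intro h
    rcases Finset.mem_insert.mp h with rfl | hk
    · exact Finset.mem_filter.mpr ⟨Finset.mem_range.mpr (Nat.lt_succ_self _), Nat.or_self _⟩
    · have h2 := mem_Pset_iff.mp hk
      refine Finset.mem_filter.mpr ⟨Finset.mem_range.mpr ?_, h2.1⟩
      have := bsub_le (or_eq_iff_bsub.mp h2.1)
      omega

lemma deriv_monomial {R : Type*} [CommRing R] [CharP R 2] (β x : R) (j : ℕ) :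
    (x + β)^j - x^j = ∑ k ∈ Pset j, β^(j-k) * x^k := by
  rw [char_two_add_pow, filter_or_eq_insert,
    Finset.sum_insert (by
      intro hmem
      exact (mem_Pset_iff.mp hmem).2 rfl)]
  rw [Nat.sub_self, pow_zero, one_mul]
  ring

end FieldLemmas

section Main

variable {F : Type*} [Field F] [Fintype F] {m n : ℕ}

lemma Pset_subset_T (hm : 0 < m) (hn : n = 2^m - 1) {S : Finset ℕ} (hS : IsExpSet n S)
    {j : ℕ} (hj : j ∈ S) :
    Pset j ⊆ (crSet n m S).biUnion fun s => ccSet n m (Pset s) := by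
  intro k hk
  obtain ⟨s, hs, hjs⟩ := exists_rep hm hn hS hj
  have hsn : s < n := (crSet_mem hm hn hS hs).2
  obtain ⟨k', hk', hkk⟩ := Pset_to_rep hm hn hsn hjs hk
  exact Finset.mem_biUnion.mpr ⟨s, hs, Finset.mem_biUnion.mpr ⟨k', hk', hkk⟩⟩

lemma T_filter_eq (hm : 0 < m) (hn : n = 2^m - 1) {S : Finset ℕ} (hS : IsExpSet n S)
    {j : ℕ} (hj : j ∈ S) :
    (((crSet n m S).biUnion fun s => ccSet n m (Pset s)).filter
      fun k => k ||| j = j ∧ k ≠ j) = Pset j := by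
  ext k
  constructor
  · intro h
    exact mem_Pset_iff.mpr (Finset.mem_filter.mp h).2
  · intro h
    exact Finset.mem_filter.mpr ⟨Pset_subset_T hm hn hS hj h, mem_Pset_iff.mp h⟩

lemma T_lt (hm : 0 < m) (hn : n = 2^m - 1) {S : Finset ℕ} {k : ℕ}
    (hk : k ∈ (crSet n m S).biUnion fun s => ccSet n m (Pset s)) : k < n := by
  obtain ⟨s, _, hks⟩ := Finset.mem_biUnion.mp hk
  obtain ⟨k', _, hkk⟩ := Finset.mem_biUnion.mp hks
  exact cycCoset_lt hm hn hkk

lemma part1 (hm : 0 < m) (hn : n = 2^m - 1) (hF : Fintype.card F = 2^m)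
    (S : Finset ℕ) (hS : IsExpSet n S) {β : F} (hβ : β ≠ 0) :
    derivSet β (extCyclicCode n S) ⊆
      (extCyclicCode n ((crSet n m S).biUnion fun s => ccSet n m (Pset s)) :
        Set (F → F)) := by
  haveI : CharP F 2 := char_two_of_card hm hF
  intro d hd
  obtain ⟨c, hcC, rfl⟩ := hd
  obtain ⟨A, hconj, hc⟩ := hcC
  classical
  refine ⟨fun k => ∑ j ∈ S, A j * (if k ||| j = j ∧ k ≠ j then β^(j-k) else 0), ?_, ?_⟩
  · -- conjugacy of the new coefficients
    intro k hk
    have hkn : k < n := T_lt hm hn hk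
    have hstep : ∀ j ∈ S, (A j * (if k ||| j = j ∧ k ≠ j then β^(j-k) else 0))^2
        = A (2*j%n) * (if (2*k%n) ||| (2*j%n) = 2*j%n ∧ 2*k%n ≠ 2*j%n
            then β^(2*j%n - 2*k%n) else 0) := by
      intro j hj
      have hjn : j < n := hS.1 j hj
      rw [mul_pow, ← hconj j hj]
      congr 1
      by_cases hcnd : k ||| j = j ∧ k ≠ j
      · rw [if_pos hcnd, if_pos ((rot_or_iff hm hn hkn hjn).mpr hcnd), ← pow_mul]
        have hk_le : k ≤ j := bsub_le (or_eq_iff_bsub.mp hcnd.1)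
        have hcnd2 := (rot_or_iff hm hn hkn hjn).mpr hcnd
        have hle2 : 2*k%n ≤ 2*j%n := bsub_le (or_eq_iff_bsub.mp hcnd2.1)
        have h1 : β^(2*j%n) = β^(2*j) := by
          rw [pow_mod_n hn hF hβ (2*j%n), Nat.mod_mod_of_dvd _ (dvd_refl n),
            ← pow_mod_n hn hF hβ]
        have h2 : β^(2*k%n) = β^(2*k) := by
          rw [pow_mod_n hn hF hβ (2*k%n), Nat.mod_mod_of_dvd _ (dvd_refl n),
            ← pow_mod_n hn hF hβ]
        rw [show (j-k)*2 = 2*j - 2*k by omega]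
        exact (pow_sub_congr hβ hle2 (by omega) h1 h2).symm
      · rw [if_neg hcnd,
          if_neg (fun hc2 => hcnd ((rot_or_iff hm hn hkn hjn).mp hc2))]
        exact zero_pow two_ne_zero
    calc (∑ j ∈ S, A j * (if (2*k%n) ||| j = j ∧ 2*k%n ≠ j then β^(j-(2*k%n)) else 0))
        = ∑ j ∈ S, (A j * (if k ||| j = j ∧ k ≠ j then β^(j-k) else 0))^2 := by
          refine (Finset.sum_nbij' (fun j => 2*j%n) (fun j => 2^(m-1)*j%n)
            (fun j hj => hS.2 j hj)
            (fun j hj => expSet_closure_pow hm hn hS hj (m-1))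
            (fun j hj => rot_inv hm hn (hS.1 j hj))
            (fun j hj => by
              show 2 * (2^(m-1)*j%n) % n = j
              have h1 := pow_mul_mod_succ hm hn (m-1) j
              rw [show m - 1 + 1 = m by omega] at h1
              rw [← h1, pow_m_mul_mod_self hm hn (hS.1 j hj)])
            (fun j hj => ?_)).symm
          simpa using hstep j hj
      _ = (∑ j ∈ S, A j * (if k ||| j = j ∧ k ≠ j then β^(j-k) else 0))^2 :=
          (CharTwo.sum_sq S _).symm
  · -- the sum formula
    intro x
    show c (x+β) - c x = _
    have hd2 : c (x+β) - c x = ∑ j ∈ S, A j * ((x+β)^j - x^j) := by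
      rw [hc (x+β), hc x, ← Finset.sum_sub_distrib]
      exact Finset.sum_congr rfl fun j _ => by ring
    rw [hd2]
    have h3 : ∀ j ∈ S, A j * ((x+β)^j - x^j)
        = ∑ k ∈ (crSet n m S).biUnion fun s => ccSet n m (Pset s),
            (A j * (if k ||| j = j ∧ k ≠ j then β^(j-k) else 0)) * x^k := by
      intro j hj
      rw [deriv_monomial, Finset.mul_sum, ← T_filter_eq hm hn hS hj, Finset.sum_filter]
      apply Finset.sum_congr rfl
      intro k _
      by_cases hcnd : k ||| j = j ∧ k ≠ j
      · rw [if_pos hcnd, if_pos hcnd]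
        ring
      · rw [if_neg hcnd, if_neg hcnd, mul_zero, zero_mul]
    rw [Finset.sum_congr rfl h3, Finset.sum_comm]
    apply Finset.sum_congr rfl
    intro k _
    exact (Finset.sum_mul _ _ _).symm

end Main

section Part2

open Polynomial

variable {F : Type*} [Field F] [Fintype F] {m n : ℕ}

lemma T_expSet (hm : 0 < m) (hn : n = 2^m - 1) (S : Finset ℕ) :
    IsExpSet n ((crSet n m S).biUnion fun s => ccSet n m (Pset s)) := by
  constructor
  · intro k hk
    exact T_lt hm hn hk
  · intro k hk
    obtain ⟨s, hs, hks⟩ := Finset.mem_biUnion.mp hk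
    obtain ⟨k', hk', hkk⟩ := Finset.mem_biUnion.mp hks
    obtain ⟨i, him, hik⟩ := mem_cycCoset_iff.mp hkk
    refine Finset.mem_biUnion.mpr ⟨s, hs, Finset.mem_biUnion.mpr ⟨k', hk',
      mem_cycCoset_iff.mpr ⟨(i+1)%m, Nat.mod_lt _ hm, ?_⟩⟩⟩
    rw [pow_mod_exp hm hn, pow_mul_mod_succ hm hn, hik]

lemma code_mono (hm : 0 < m) (hn : n = 2^m - 1) {T S' : Finset ℕ}
    (hT : IsExpSet n T) (hS' : IsExpSet n S') (hsub : T ⊆ S') :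
    (extCyclicCode n T : Set (F → F)) ⊆ extCyclicCode n S' := by
  classical
  intro c hc
  obtain ⟨A, hconj, hsum⟩ := hc
  refine ⟨fun u => if u ∈ T then A u else 0, ?_, ?_⟩
  · intro j hj
    show (if 2*j%n ∈ T then A (2*j%n) else 0) = (if j ∈ T then A j else 0)^2
    by_cases hjT : j ∈ T
    · rw [if_pos hjT, if_pos (hT.2 j hjT), hconj j hjT]
    · rw [if_neg hjT,
        if_neg (fun h2 => hjT (expSet_pre hm hn hT (hS'.1 j hj) h2))]
      rw [zero_pow two_ne_zero]
  · intro x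
    rw [hsum x]
    have h1 : ∀ u ∈ S', (if u ∈ T then A u else 0) * x^u
        = if u ∈ T then A u * x^u else 0 := by
      intro u _
      by_cases hu : u ∈ T
      · rw [if_pos hu, if_pos hu]
      · rw [if_neg hu, if_neg hu, zero_mul]
    rw [Finset.sum_congr rfl h1, ← Finset.sum_filter]
    have h2 : S'.filter (fun u => u ∈ T) = T := by
      ext u
      simp only [Finset.mem_filter]
      exact ⟨fun h => h.2, fun h => ⟨hsub h, h⟩⟩
    rw [h2]

lemma rot_exp_succ (hm : 0 < m) (hn : n = 2^m - 1) (i s : ℕ) :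
    2^((i+1)%m) * s % n = 2*(2^i*s%n)%n := by
  rw [pow_mod_exp hm hn, pow_mul_mod_succ hm hn]

lemma Pk_mem_S' (hm : 0 < m) (hn : n = 2^m - 1) (hF : Fintype.card F = 2^m)
    {S S' : Finset ℕ} (hS : IsExpSet n S) (hS' : IsExpSet n S') {β : F} (hβ : β ≠ 0)
    (hsub : derivSet β (extCyclicCode n S) ⊆ (extCyclicCode n S' : Set (F → F)))
    {s : ℕ} (hs : s ∈ crSet n m S) {k : ℕ} (hk : k ∈ Pset s) : k ∈ S' := by
  haveI : CharP F 2 := char_two_of_card hm hF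
  classical
  have hsS : s ∈ S := (crSet_mem hm hn hS hs).1
  have hsn : s < n := (crSet_mem hm hn hS hs).2
  have hkn : k < n := lt_of_le_of_lt (Pset_le hk) hsn
  have hcard : (2:ℕ)^m = Fintype.card F := hF.symm
  -- the linearized polynomial in `a`
  set L : Polynomial F := ∑ i ∈ Finset.range m,
      Polynomial.C (if k ∈ Pset (2^i*s%n) then β^(2^i*s%n - k) else 0)
        * Polynomial.X ^ (2^i : ℕ) with hL
  have ht0 : 2^0*s%n = s := by
    rw [pow_zero, one_mul, Nat.mod_eq_of_lt hsn]
  have hL1 : L.coeff 1 = β^(s-k) := by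
    rw [hL, Polynomial.finset_sum_coeff]
    have hterm : ∀ i ∈ Finset.range m,
        (Polynomial.C (if k ∈ Pset (2^i*s%n) then β^(2^i*s%n - k) else 0)
          * Polynomial.X ^ (2^i : ℕ)).coeff 1
        = if i = 0 then β^(s-k) else 0 := by
      intro i _
      rw [Polynomial.coeff_C_mul, Polynomial.coeff_X_pow]
      by_cases hi : i = 0
      · subst hi
        rw [show (2:ℕ)^0 * s % n = s from ht0, if_pos hk,
          if_pos (show (1:ℕ) = 2^0 by norm_num), mul_one, if_pos rfl]
      · rw [if_neg hi, if_neg (show ¬ ((1:ℕ) = 2^i) from by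
          intro h1
          have h2 : (2:ℕ)^i ≥ 2 := by
            calc (2:ℕ) = 2^1 := (pow_one 2).symm
            _ ≤ 2^i := Nat.pow_le_pow_right (by norm_num) (by omega)
          omega), mul_zero]
    rw [Finset.sum_congr rfl hterm, Finset.sum_ite_eq' (Finset.range m) 0 (fun _ => β^(s-k)),
      if_pos (Finset.mem_range.mpr hm)]
  have hLne : L ≠ 0 := by
    intro h0
    rw [h0, Polynomial.coeff_zero] at hL1
    exact pow_ne_zero _ hβ hL1.symm
  have hLdeg : L.natDegree < Fintype.card F := by
    rw [hF]
    have h1 : L.natDegree ≤ 2^(m-1) := by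
      apply Polynomial.natDegree_sum_le_of_forall_le
      intro i hi
      calc (Polynomial.C _ * Polynomial.X ^ (2^i : ℕ)).natDegree
          ≤ (Polynomial.X ^ (2^i : ℕ) : Polynomial F).natDegree :=
            Polynomial.natDegree_C_mul_le _ _
        _ = 2^i := Polynomial.natDegree_X_pow _
        _ ≤ 2^(m-1) := Nat.pow_le_pow_right (by norm_num)
            (by have := Finset.mem_range.mp hi; omega)
    have h2 : (2:ℕ)^(m-1) < 2^m := Nat.pow_lt_pow_right (by norm_num) (by omega)
    omega
  obtain ⟨a, ha⟩ := poly_exists_eval_ne L hLne hLdeg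
  -- the codeword supported on the coset of s
  set A : ℕ → F := fun t => ∑ i ∈ Finset.range m, if 2^i*s%n = t then a^(2^i : ℕ) else 0
    with hA
  have hval : ∀ i, i < m → a^(2^((i+1)%m) : ℕ) = (a^(2^i : ℕ))^2 := by
    intro i him
    rw [← pow_mul, ← pow_succ]
    by_cases hi : i + 1 < m
    · rw [Nat.mod_eq_of_lt hi]
    · have hieq : i + 1 = m := by omega
      rw [hieq, Nat.mod_self, pow_zero, pow_one]
      exact (pow_card_F hF a).symm
  have hconjA : ∀ j ∈ S, A (2 * j % n) = A j ^ 2 := by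
    intro j hj
    have hjn : j < n := hS.1 j hj
    rw [hA]
    simp only []
    rw [CharTwo.sum_sq]
    refine (Finset.sum_nbij' (fun i => (i+1)%m) (fun i => (i+(m-1))%m)
      (fun i hi => Finset.mem_range.mpr (Nat.mod_lt _ hm))
      (fun i hi => Finset.mem_range.mpr (Nat.mod_lt _ hm))
      (fun i hi => ?_) (fun i hi => ?_) (fun i hi => ?_)).symm
    · -- left inv
      show ((i+1)%m + (m-1))%m = i
      have him := Finset.mem_range.mp hi
      by_cases h1 : i + 1 < m
      · rw [Nat.mod_eq_of_lt h1, show i + 1 + (m-1) = i + m by omega,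
          Nat.add_mod_right, Nat.mod_eq_of_lt him]
      · have h2 : i + 1 = m := by omega
        rw [h2, Nat.mod_self, Nat.zero_add, Nat.mod_eq_of_lt (by omega : m - 1 < m)]
        omega
    · -- right inv
      show ((i+(m-1))%m + 1)%m = i
      have him := Finset.mem_range.mp hi
      by_cases h1 : i = 0
      · rw [h1, Nat.zero_add, Nat.mod_eq_of_lt (by omega : m - 1 < m),
          show m - 1 + 1 = m by omega, Nat.mod_self]
      · rw [show i + (m-1) = (i-1) + m by omega, Nat.add_mod_right,
          Nat.mod_eq_of_lt (by omega : i - 1 < m), show i - 1 + 1 = i by omega,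
          Nat.mod_eq_of_lt him]
    · -- values
      have him := Finset.mem_range.mp hi
      by_cases hcnd : 2^i*s%n = j
      · rw [if_pos hcnd, if_pos (by rw [rot_exp_succ hm hn, hcnd]), hval i him]
      · rw [if_neg hcnd, if_neg (by
          intro h1
          rw [rot_exp_succ hm hn] at h1
          exact hcnd (rot_inj hm hn (Nat.mod_lt _ (n_pos hm hn)) hjn h1)),
          zero_pow two_ne_zero]
  have hcw : (fun x : F => ∑ j ∈ S, A j * x^j) ∈ (extCyclicCode n S : Set (F → F)) :=
    ⟨A, hconjA, fun x => rfl⟩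
  have hcw_eval : ∀ x : F, (∑ j ∈ S, A j * x^j)
      = ∑ i ∈ Finset.range m, a^(2^i : ℕ) * x^(2^i*s%n) := by
    intro x
    rw [hA]
    simp only []
    have h1 : ∀ j ∈ S, (∑ i ∈ Finset.range m, if 2^i*s%n = j then a^(2^i : ℕ) else 0) * x^j
        = ∑ i ∈ Finset.range m, (if 2^i*s%n = j then a^(2^i : ℕ) * x^(2^i*s%n) else 0) := by
      intro j hj
      rw [Finset.sum_mul]
      apply Finset.sum_congr rfl
      intro i _
      by_cases hcnd : 2^i*s%n = j
      · rw [if_pos hcnd, if_pos hcnd, hcnd]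
      · rw [if_neg hcnd, if_neg hcnd, zero_mul]
    rw [Finset.sum_congr rfl h1, Finset.sum_comm]
    apply Finset.sum_congr rfl
    intro i _
    rw [Finset.sum_ite_eq (S) (2^i*s%n) (fun _ => a^(2^i : ℕ) * x^(2^i*s%n)),
      if_pos (expSet_closure_pow hm hn hS hsS i)]
  -- the derivative lies in C(S')
  have hder : (fun x : F => (∑ j ∈ S, A j * (x+β)^j) - ∑ j ∈ S, A j * x^j)
      ∈ (extCyclicCode n S' : Set (F → F)) := by
    apply hsub
    exact ⟨_, hcw, rfl⟩
  obtain ⟨A', hconj', hsum'⟩ := hder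
  -- polynomial identity
  set p : Polynomial F := ∑ i ∈ Finset.range m,
      Polynomial.C (a^(2^i : ℕ)) *
        ((Polynomial.X + Polynomial.C β)^(2^i*s%n) - Polynomial.X ^ (2^i*s%n)) with hp
  set q : Polynomial F := ∑ u ∈ S', Polynomial.C (A' u) * Polynomial.X ^ u with hq
  have hpeval : ∀ x : F, p.eval x = (∑ j ∈ S, A j * (x+β)^j) - ∑ j ∈ S, A j * x^j := by
    intro x
    rw [hp, Polynomial.eval_finset_sum]
    simp only [Polynomial.eval_mul, Polynomial.eval_C, Polynomial.eval_sub,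
      Polynomial.eval_pow, Polynomial.eval_add, Polynomial.eval_X]
    rw [hcw_eval (x+β), hcw_eval x, ← Finset.sum_sub_distrib]
    apply Finset.sum_congr rfl
    intro i _
    ring
  have hqeval : ∀ x : F, q.eval x = (∑ j ∈ S, A j * (x+β)^j) - ∑ j ∈ S, A j * x^j := by
    intro x
    rw [hq, Polynomial.eval_finset_sum]
    simp only [Polynomial.eval_mul, Polynomial.eval_C, Polynomial.eval_pow, Polynomial.eval_X]
    have := hsum' x
    simp only [] at this
    rw [← this]
  have hpdeg : p.natDegree < Fintype.card F := by
    rw [hF]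
    have h1 : p.natDegree ≤ n := by
      apply Polynomial.natDegree_sum_le_of_forall_le
      intro i _
      calc (Polynomial.C (a^(2^i : ℕ)) *
            ((Polynomial.X + Polynomial.C β)^(2^i*s%n) - Polynomial.X ^ (2^i*s%n))).natDegree
          ≤ ((Polynomial.X + Polynomial.C β)^(2^i*s%n)
              - Polynomial.X ^ (2^i*s%n) : Polynomial F).natDegree :=
            Polynomial.natDegree_C_mul_le _ _
        _ ≤ max ((Polynomial.X + Polynomial.C β)^(2^i*s%n) : Polynomial F).natDegree
              ((Polynomial.X ^ (2^i*s%n) : Polynomial F)).natDegree :=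
            Polynomial.natDegree_sub_le _ _
        _ ≤ 2^i*s%n := by
            apply max_le
            · calc ((Polynomial.X + Polynomial.C β)^(2^i*s%n) : Polynomial F).natDegree
                  ≤ (2^i*s%n) * (Polynomial.X + Polynomial.C β : Polynomial F).natDegree :=
                    Polynomial.natDegree_pow_le
                _ ≤ (2^i*s%n) * 1 := by
                    apply Nat.mul_le_mul_left
                    exact le_of_eq (Polynomial.natDegree_X_add_C β)
                _ = 2^i*s%n := mul_one _
            · exact le_of_eq (Polynomial.natDegree_X_pow _)
        _ ≤ n := le_of_lt (Nat.mod_lt _ (n_pos hm hn))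
    have h2 : n < 2^m := by
      have := n_succ hm hn
      omega
    omega
  have hqdeg : q.natDegree < Fintype.card F := by
    rw [hF]
    have h1 : q.natDegree ≤ n := poly_natDegree_sum_le S' A' n
      (fun u hu => le_of_lt (hS'.1 u hu))
    have h2 : n < 2^m := by
      have := n_succ hm hn
      omega
    omega
  have hpq : p = q := poly_eq_of_eval_eq p q hpdeg hqdeg
    (fun x => by rw [hpeval x, hqeval x])
  -- extract the coefficient at k
  have hpk : p.coeff k = L.eval a := by
    rw [hp, Polynomial.finset_sum_coeff, hL, Polynomial.eval_finset_sum]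
    apply Finset.sum_congr rfl
    intro i _
    rw [Polynomial.coeff_C_mul]
    have hdm := deriv_monomial (Polynomial.C β) (Polynomial.X : Polynomial F) (2^i*s%n)
    rw [hdm]
    have h1 : ∀ k' ∈ Pset (2^i*s%n),
        (Polynomial.C β)^(2^i*s%n - k') * (Polynomial.X : Polynomial F)^k'
        = Polynomial.C (β^(2^i*s%n - k')) * Polynomial.X ^ k' := by
      intro k' _
      rw [map_pow]
    rw [Finset.sum_congr rfl h1, poly_coeff_sum]
    simp only [Polynomial.eval_mul, Polynomial.eval_C, Polynomial.eval_pow, Polynomial.eval_X]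
    ring
  have hqk : q.coeff k = if k ∈ S' then A' k else 0 := poly_coeff_sum S' A' k
  by_contra hkS'
  rw [hpq, hqk, if_neg hkS'] at hpk
  exact ha hpk.symm

end Part2

section Final

variable {F : Type*} [Field F] [Fintype F] {m n : ℕ}

lemma part2 (hm : 0 < m) (hn : n = 2^m - 1) (hF : Fintype.card F = 2^m)
    {S : Finset ℕ} (hS : IsExpSet n S) {β : F} (hβ : β ≠ 0)
    (S' : Finset ℕ) (hS' : IsExpSet n S')
    (hsub : derivSet β (extCyclicCode n S) ⊆ (extCyclicCode n S' : Set (F → F))) :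
    (extCyclicCode n ((crSet n m S).biUnion fun s => ccSet n m (Pset s)) :
        Set (F → F)) ⊆ extCyclicCode n S' := by
  apply code_mono hm hn (T_expSet hm hn S) hS'
  intro t ht
  obtain ⟨s, hs, hts⟩ := Finset.mem_biUnion.mp ht
  obtain ⟨k', hk', htk⟩ := Finset.mem_biUnion.mp hts
  have hk'S' : k' ∈ S' := Pk_mem_S' hm hn hF hS hS' hβ hsub hs hk'
  obtain ⟨i, _, hit⟩ := mem_cycCoset_iff.mp htk
  rw [← hit]
  exact expSet_closure_pow hm hn hS' hk'S' i

end Final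


/-- Theorem 1: for an extended cyclic code `C` with exponent set `S_C`, the cyclic
derivative descendants `D(C, β)` in all directions `β ∈ F^*` are the same code
`D(C)`, namely the extended cyclic code whose exponent set is
`∪_{s ∈ cr(S_C)} cc(P(s))`: for every direction `β ≠ 0`, this code contains all
the derivatives of codewords of `C` in direction `β`, and it is contained in
every extended cyclic code containing those derivatives. -/
theorem cyclicDD_of_extended_cyclic_code (m : ℕ) (hm : 0 < m)
    (n : ℕ) (hn : n = 2 ^ m - 1)
    {F : Type*} [Field F] [Fintype F] (hF : Fintype.card F = 2 ^ m)
    (S : Finset ℕ) (hS : IsExpSet n S) :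
    ∀ β : F, β ≠ 0 →
      derivSet β (extCyclicCode n S)
          ⊆ (extCyclicCode n ((crSet n m S).biUnion fun s => ccSet n m (Pset s)) :
              Set (F → F)) ∧
      ∀ S' : Finset ℕ, IsExpSet n S' →
        derivSet β (extCyclicCode n S) ⊆ (extCyclicCode n S' : Set (F → F)) →
        (extCyclicCode n ((crSet n m S).biUnion fun s => ccSet n m (Pset s)) :
            Set (F → F)) ⊆ extCyclicCode n S' := by
  intro β hβ
  exact ⟨part1 hm hn hF S hS hβ,
    fun S' hS' hsub => part2 hm hn hF hS hβ S' hS' hsub⟩
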